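/- Let λ_max ≥ λ₀ > λ > 0. Then: (i) θ*_λ ∈ A and moreover ‖θ*_λ − θ₀‖₂ < r (strict inequality), so A contains a point satisfying the ball constraint strictly (Slater's condition for the problem of optimizing a linear functional over A); and (ii) for every vector v ∈ ℝ^m, the minimum of θ ↦ ⟨θ, v⟩ over A is attained at some point of A. -/

import Mathlib

open Real Finset Set

noncomputable def hfun (t : ℝ) : ℝ := t * Real.log t + (1 - t) * Real.log (1 - t)
noncomputable def hder (t : ℝ) : ℝ := Real.log t - Real.log (1 - t)
noncomputable def psiF (t : ℝ) : ℝ := hder t - 4 * t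

lemma hfun_hasDerivAt {t : ℝ} (h0 : 0 < t) (h1 : t < 1) :
    HasDerivAt hfun (hder t) t := by
  have h1' : (0:ℝ) < 1 - t := by linarith
  have d1 : HasDerivAt (fun x : ℝ => x * Real.log x) (Real.log t + 1) t := by
    have := (hasDerivAt_id t).mul (Real.hasDerivAt_log (ne_of_gt h0))
    convert this using 1
    any_goals rfl
    rw [id_eq, mul_inv_cancel₀ (ne_of_gt h0)]; ring
  have inner : HasDerivAt (fun x : ℝ => 1 - x) (-1) t := by
    simpa using (hasDerivAt_id t).const_sub (1:ℝ)
  have d2' : HasDerivAt (fun y : ℝ => y * Real.log y) (Real.log (1-t) + 1) (1-t) := by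
    have := (hasDerivAt_id (1-t)).mul (Real.hasDerivAt_log (ne_of_gt h1'))
    convert this using 1
    any_goals rfl
    rw [id_eq, mul_inv_cancel₀ (ne_of_gt h1')]; ring
  have d2 : HasDerivAt (fun x : ℝ => (1 - x) * Real.log (1 - x))
      ((Real.log (1-t) + 1) * (-1)) t := d2'.comp t inner
  have := d1.add d2
  convert this using 1
  any_goals rfl
  unfold hder; ring

lemma hder_hasDerivAt {t : ℝ} (h0 : 0 < t) (h1 : t < 1) :
    HasDerivAt hder (1/t + 1/(1-t)) t := by
  have h1' : (0:ℝ) < 1 - t := by linarith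
  have inner : HasDerivAt (fun x : ℝ => 1 - x) (-1) t := by
    simpa using (hasDerivAt_id t).const_sub (1:ℝ)
  have d2 : HasDerivAt (fun x : ℝ => Real.log (1 - x)) ((1-t)⁻¹ * (-1)) t :=
    (Real.hasDerivAt_log (ne_of_gt h1')).comp t inner
  have := (Real.hasDerivAt_log (ne_of_gt h0)).sub d2
  convert this using 1
  any_goals rfl
  field_simp
  ring

lemma psiF_hasDerivAt {t : ℝ} (h0 : 0 < t) (h1 : t < 1) :
    HasDerivAt psiF (1/t + 1/(1-t) - 4) t := by
  have := (hder_hasDerivAt h0 h1).sub ((hasDerivAt_id t).const_mul (4:ℝ))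
  convert this using 1
  any_goals rfl
  simp

lemma psiF_deriv_pos {t : ℝ} (h0 : 0 < t) (h1 : t < 1) (hne : t ≠ 1/2) :
    0 < 1/t + 1/(1-t) - 4 := by
  have h1' : (0:ℝ) < 1 - t := by linarith
  have hq : (0:ℝ) < (1 - 2*t)^2 := by
    have : 1 - 2*t ≠ 0 := fun h => hne (by linarith)
    positivity
  rw [div_add_div _ _ (ne_of_gt h0) (ne_of_gt h1')]
  rw [div_sub' (by positivity)]
  apply div_pos _ (by positivity)
  nlinarith

lemma psiF_strictMono : ∀ a ∈ Ioo (0:ℝ) 1, ∀ y ∈ Ioo (0:ℝ) 1, a < y → psiF a < psiF y := by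
  have hcont : ∀ s ⊆ Ioo (0:ℝ) 1, ContinuousOn psiF s := by
    intro s hs x hx
    exact ((psiF_hasDerivAt (hs hx).1 (hs hx).2).continuousAt).continuousWithinAt
  have hmono1 : StrictMonoOn psiF (Ioc (0:ℝ) (1/2)) := by
    apply strictMonoOn_of_deriv_pos (convex_Ioc _ _) (hcont _ (by
      intro x hx; exact ⟨hx.1, by linarith [hx.2]⟩))
    intro x hx
    rw [interior_Ioc] at hx
    rw [(psiF_hasDerivAt hx.1 (by linarith [hx.2])).deriv]
    exact psiF_deriv_pos hx.1 (by linarith [hx.2]) (ne_of_lt hx.2)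
  have hmono2 : StrictMonoOn psiF (Ico (1/2:ℝ) 1) := by
    apply strictMonoOn_of_deriv_pos (convex_Ico _ _) (hcont _ (by
      intro x hx; exact ⟨by linarith [hx.1], hx.2⟩))
    intro x hx
    rw [interior_Ico] at hx
    rw [(psiF_hasDerivAt (by linarith [hx.1]) hx.2).deriv]
    exact psiF_deriv_pos (by linarith [hx.1]) hx.2 (ne_of_gt hx.1)
  intro a ha y hy hay
  rcases le_or_gt y (1/2) with h | h
  · exact hmono1 ⟨ha.1, by linarith⟩ ⟨hy.1, h⟩ hay
  rcases le_or_gt (1/2) a with h' | h'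
  · exact hmono2 ⟨h', ha.2⟩ ⟨le_of_lt h, hy.2⟩ hay
  · calc psiF a < psiF (1/2) := hmono1 ⟨ha.1, le_of_lt h'⟩ ⟨by norm_num, le_refl _⟩ h'
      _ < psiF y := hmono2 ⟨le_refl _, by norm_num⟩ ⟨le_of_lt h, hy.2⟩ h

/-- Strict Pinsker-type inequality for the Bernoulli entropy. -/
lemma breg_lt {a y : ℝ} (ha : a ∈ Ioo (0:ℝ) 1) (hy : y ∈ Ioo (0:ℝ) 1) (hne : y ≠ a) :
    2 * (y - a)^2 < hfun y - hfun a - hder a * (y - a) := by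
  set F : ℝ → ℝ := fun z => hfun z - hfun a - hder a * (z - a) - 2 * (z - a)^2 with hF
  have hFa : F a = 0 := by simp [hF]
  have hFderiv : ∀ z ∈ Ioo (0:ℝ) 1, HasDerivAt F (psiF z - psiF a) z := by
    intro z hz
    have := (((hfun_hasDerivAt hz.1 hz.2).sub (hasDerivAt_const z (hfun a))).sub
      (((hasDerivAt_id z).sub (hasDerivAt_const z a)).const_mul (hder a))).sub
      ((((hasDerivAt_id z).sub (hasDerivAt_const z a)).pow 2).const_mul (2:ℝ))
    convert this using 1
    any_goals rfl
    unfold psiF; ring_nf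
    simp [hder]
    ring
  have hcont : ∀ s ⊆ Ioo (0:ℝ) 1, ContinuousOn F s := fun s hs x hx =>
    ((hFderiv x (hs hx)).continuousAt).continuousWithinAt
  have key : 0 < F y := by
    rcases lt_or_gt_of_ne hne with h | h
    · -- y < a : F strictly antitone on Icc y a
      have : StrictAntiOn F (Icc y a) := by
        apply strictAntiOn_of_deriv_neg (convex_Icc _ _) (hcont _ (by
          intro x hx; exact ⟨lt_of_lt_of_le hy.1 hx.1, lt_of_le_of_lt hx.2 ha.2⟩))
        intro x hx
        rw [interior_Icc] at hx
        have hx' : x ∈ Ioo (0:ℝ) 1 := ⟨lt_trans hy.1 hx.1, lt_trans hx.2 ha.2⟩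
        rw [(hFderiv x hx').deriv]
        have := psiF_strictMono x hx' a ha hx.2
        linarith
      have := this ⟨le_refl _, le_of_lt h⟩ ⟨le_of_lt h, le_refl _⟩ h
      rwa [hFa] at this
    · -- a < y : F strictly monotone on Icc a y
      have : StrictMonoOn F (Icc a y) := by
        apply strictMonoOn_of_deriv_pos (convex_Icc _ _) (hcont _ (by
          intro x hx; exact ⟨lt_of_lt_of_le ha.1 hx.1, lt_of_le_of_lt hx.2 hy.2⟩))
        intro x hx
        rw [interior_Icc] at hx
        have hx' : x ∈ Ioo (0:ℝ) 1 := ⟨lt_trans ha.1 hx.1, lt_trans hx.2 hy.2⟩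
        rw [(hFderiv x hx').deriv]
        have := psiF_strictMono a ha x hx' hx.1
        linarith
      have := this ⟨le_refl _, le_of_lt h⟩ ⟨le_of_lt h, le_refl _⟩ h
      rwa [hFa] at this
  simp only [hF] at key
  linarith

lemma breg_le {a y : ℝ} (ha : a ∈ Ioo (0:ℝ) 1) (hy : y ∈ Ioo (0:ℝ) 1) :
    2 * (y - a)^2 ≤ hfun y - hfun a - hder a * (y - a) := by
  by_cases h : y = a
  · subst h; simp
  · exact le_of_lt (breg_lt ha hy h)

lemma breg_nonneg {a y : ℝ} (ha : a ∈ Ioo (0:ℝ) 1) (hy : y ∈ Ioo (0:ℝ) 1) :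
    0 ≤ hfun y - hfun a - hder a * (y - a) := by
  have := breg_le ha hy
  nlinarith


/-- The dual objective `g(θ) = (1/m) Σ_i [θ_i log θ_i + (1−θ_i) log(1−θ_i)]`. -/
noncomputable def g (m : ℕ) (θ : Fin m → ℝ) : ℝ :=
  (1 / (m : ℝ)) * ∑ i, (θ i * Real.log (θ i) + (1 - θ i) * Real.log (1 - θ i))

/-- The gradient of `g`, componentwise `(1/m) log(θ_i/(1−θ_i))`. -/
noncomputable def gradg (m : ℕ) (θ : Fin m → ℝ) : Fin m → ℝ :=
  fun i => (1 / (m : ℝ)) * Real.log (θ i / (1 - θ i))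
/-- The dual feasible set `F_λ`: componentwise in `(0,1)`, `|⟨θ, x̄^j⟩| ≤ mλ` for all
columns `x̄^j = X j`, and `⟨θ, b⟩ = 0`. -/
def Feas (m p : ℕ) (X : Fin p → Fin m → ℝ) (b : Fin m → ℝ) (lam : ℝ) :
    Set (Fin m → ℝ) :=
  {θ | (∀ i, 0 < θ i ∧ θ i < 1) ∧ (∀ j, |∑ i, θ i * X j i| ≤ (m : ℝ) * lam) ∧
    ∑ i, θ i * b i = 0}
open scoped Classical in
/-- `m⁺ = #{i : b_i = 1}`. -/
noncomputable def mPlus (m : ℕ) (b : Fin m → ℝ) : ℕ :=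
  (Finset.univ.filter (fun i => b i = 1)).card

open scoped Classical in
/-- `m⁻ = #{i : b_i = −1}`. -/
noncomputable def mMinus (m : ℕ) (b : Fin m → ℝ) : ℕ :=
  (Finset.univ.filter (fun i => b i = -1)).card

open scoped Classical in
/-- `θ_max`, with `(θ_max)_i = m⁻/m` if `b_i = 1` and `m⁺/m` if `b_i = −1`. -/
noncomputable def thetaMax (m : ℕ) (b : Fin m → ℝ) : Fin m → ℝ :=
  fun i => if b i = 1 then (mMinus m b : ℝ) / m else (mPlus m b : ℝ) / m

/-- `λ_max = (1/m) max_j |⟨θ_max, x̄^j⟩|`. -/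
noncomputable def lamMax (m p : ℕ) (X : Fin p → Fin m → ℝ) (b : Fin m → ℝ) : ℝ :=
  (1 / (m : ℝ)) * ⨆ j : Fin p, |∑ i, thetaMax m b i * X j i|
/-- `P`, the orthogonal projection onto the orthogonal complement of `b`:
`Pv = v − (⟨v,b⟩/‖b‖₂²) b`. -/
noncomputable def Pb (m : ℕ) (b : Fin m → ℝ) (v : Fin m → ℝ) : Fin m → ℝ :=
  fun i => v i - ((∑ k, v k * b k) / (∑ k, (b k) ^ 2)) * b i

set_option maxHeartbeats 1000000 in
/-- Lemma 6: (i) `θ*_λ ∈ A` and `‖θ*_λ − θ₀‖₂ < r` strictly (Slater's condition);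
(ii) for every `v`, the linear functional `θ ↦ ⟨θ, v⟩` attains its minimum over `A`. -/
theorem slores_slater_and_attainment
 (m p : ℕ) (hm : 1 ≤ m) (hp : 1 ≤ p)
    (X : Fin p → Fin m → ℝ) (b : Fin m → ℝ) (hb : ∀ i, b i = 1 ∨ b i = -1)
    (hmp : 1 ≤ mPlus m b) (hmm : 1 ≤ mMinus m b) (hlmax : 0 < lamMax m p X b)
    (lam lam₀ : ℝ) (hlam : 0 < lam) (hll : lam < lam₀) (hle : lam₀ ≤ lamMax m p X b)
    (θ₀ : Fin m → ℝ)
    (hθ₀ : θ₀ ∈ Feas m p X b lam₀ ∧ ∀ θ ∈ Feas m p X b lam₀, g m θ₀ ≤ g m θ)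
    (r : ℝ)
    (hr : r = Real.sqrt (((m : ℝ) / 2) * (g m (fun i => (lam / lam₀) * θ₀ i) - g m θ₀
      + (1 - lam / lam₀) * ∑ i, gradg m θ₀ i * θ₀ i)))
    (j₀ : Fin p) (hj₀ : |∑ i, θ₀ i * X j₀ i| = (m : ℝ) * lam₀)
    (xstar : Fin m → ℝ)
    (hxstar : xstar = fun i => Real.sign (∑ k, θ₀ k * X j₀ k) * X j₀ i)
    (A : Set (Fin m → ℝ))
    (hA : A = {θ | ∑ i, (θ i - θ₀ i) ^ 2 ≤ r ^ 2 ∧ ∑ i, θ i * b i = 0 ∧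
      ∑ i, θ i * xstar i ≤ (m : ℝ) * lam})
    (θs : Fin m → ℝ)
    (hθs : θs ∈ Feas m p X b lam ∧ ∀ θ ∈ Feas m p X b lam, g m θs ≤ g m θ) :
    (θs ∈ A ∧ ∑ i, (θs i - θ₀ i) ^ 2 < r ^ 2) ∧
    (∀ v : Fin m → ℝ, ∃ θ' ∈ A, ∀ θ ∈ A, ∑ i, θ' i * v i ≤ ∑ i, θ i * v i) := by
  classical
  have hM : (0:ℝ) < (m:ℝ) := by exact_mod_cast hm
  have hlam₀ : 0 < lam₀ := lt_trans hlam hll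
  set s : ℝ := lam / lam₀ with hs_def
  have hs0 : 0 < s := div_pos hlam hlam₀
  have hs1 : s < 1 := (div_lt_one hlam₀).2 hll
  have hslam : s * lam₀ = lam := div_mul_cancel₀ lam (ne_of_gt hlam₀)
  obtain ⟨⟨hθ₀C, hθ₀X, hθ₀b⟩, hθ₀min⟩ := hθ₀
  obtain ⟨⟨hθsC, hθsX, hθsb⟩, hθsmin⟩ := hθs
  set θ' : Fin m → ℝ := fun i => s * θ₀ i with hθ'_def
  -- θ' feasible for lam
  have hθ'C : ∀ i, 0 < θ' i ∧ θ' i < 1 := by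
    intro i
    constructor
    · exact mul_pos hs0 (hθ₀C i).1
    · calc s * θ₀ i < s * 1 := by
            exact mul_lt_mul_of_pos_left (hθ₀C i).2 hs0
        _ < 1 := by linarith
  have hθ'F : θ' ∈ Feas m p X b lam := by
    refine ⟨hθ'C, ?_, ?_⟩
    · intro j
      have h1 : ∑ i, θ' i * X j i = s * ∑ i, θ₀ i * X j i := by
        rw [Finset.mul_sum]; exact Finset.sum_congr rfl fun i _ => by ring
      rw [h1, abs_mul, abs_of_pos hs0]
      calc s * |∑ i, θ₀ i * X j i| ≤ s * ((m:ℝ) * lam₀) :=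
            mul_le_mul_of_nonneg_left (hθ₀X j) (le_of_lt hs0)
        _ = (m:ℝ) * lam := by rw [← hslam]; ring
    · have h1 : ∑ i, θ' i * b i = s * ∑ i, θ₀ i * b i := by
        rw [Finset.mul_sum]; exact Finset.sum_congr rfl fun i _ => by ring
      rw [h1, hθ₀b, mul_zero]
  have hgs' : g m θs ≤ g m θ' := hθsmin θ' hθ'F
  have hθsF₀ : θs ∈ Feas m p X b lam₀ := by
    refine ⟨hθsC, fun j => le_trans (hθsX j) ?_, hθsb⟩
    exact mul_le_mul_of_nonneg_left (le_of_lt hll) (le_of_lt hM)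
  have hg0s : g m θ₀ ≤ g m θs := hθ₀min θs hθsF₀
  -- the active column
  set c : ℝ := ∑ i, θ₀ i * X j₀ i with hc_def
  have hcne : c ≠ 0 := by
    intro h
    rw [h, abs_zero] at hj₀
    nlinarith
  have hsignc : Real.sign c * c = |c| := by
    rcases lt_or_gt_of_ne hcne with h | h
    · rw [Real.sign_of_neg h, abs_of_neg h]; ring
    · rw [Real.sign_of_pos h, abs_of_pos h]; ring
  have hx0 : ∑ i, θ₀ i * xstar i = (m:ℝ) * lam₀ := by
    rw [hxstar]
    calc ∑ i, θ₀ i * (Real.sign c * X j₀ i) = Real.sign c * ∑ i, θ₀ i * X j₀ i := by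
          rw [Finset.mul_sum]; exact Finset.sum_congr rfl fun i _ => by ring
      _ = |c| := hsignc
      _ = (m:ℝ) * lam₀ := hj₀
  have hxs : ∑ i, θs i * xstar i ≤ (m:ℝ) * lam := by
    rw [hxstar]
    have h1 : ∑ i, θs i * (Real.sign c * X j₀ i) = Real.sign c * ∑ i, θs i * X j₀ i := by
      rw [Finset.mul_sum]; exact Finset.sum_congr rfl fun i _ => by ring
    rw [h1]
    have h2 : Real.sign c * ∑ i, θs i * X j₀ i ≤ |∑ i, θs i * X j₀ i| := by
      rcases lt_or_gt_of_ne hcne with h | h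
      · rw [Real.sign_of_neg h]; rw [neg_one_mul]; exact neg_le_abs _
      · rw [Real.sign_of_pos h, one_mul]; exact le_abs_self _
    exact le_trans h2 (hθsX j₀)
  have hnse : θs ≠ θ₀ := by
    intro h
    rw [h, hx0] at hxs
    nlinarith
  -- Bregman sums
  set Bs : ℝ := ∑ i, (hfun (θs i) - hfun (θ₀ i) - hder (θ₀ i) * (θs i - θ₀ i)) with hBs_def
  set B' : ℝ := ∑ i, (hfun (θ' i) - hfun (θ₀ i) - hder (θ₀ i) * (θ' i - θ₀ i)) with hB'_def
  have hIoo : ∀ (θ : Fin m → ℝ), (∀ i, 0 < θ i ∧ θ i < 1) → ∀ i, θ i ∈ Set.Ioo (0:ℝ) 1 :=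
    fun θ h i => ⟨(h i).1, (h i).2⟩
  have key1 : 2 * ∑ i, (θs i - θ₀ i)^2 < Bs := by
    rw [Finset.mul_sum, hBs_def]
    obtain ⟨i₀, hi₀⟩ := Function.ne_iff.1 hnse
    refine Finset.sum_lt_sum (fun i _ => breg_le (hIoo _ hθ₀C i) (hIoo _ hθsC i)) ⟨i₀, Finset.mem_univ _, ?_⟩
    exact breg_lt (hIoo _ hθ₀C i₀) (hIoo _ hθsC i₀) hi₀
  have hMg : ∀ (θ : Fin m → ℝ), (m:ℝ) * g m θ = ∑ i, hfun (θ i) := by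
    intro θ
    rw [g]
    field_simp [hfun]
    rfl
  have hgradg : ∀ i, gradg m θ₀ i = (1/(m:ℝ)) * hder (θ₀ i) := by
    intro i
    rw [gradg, hder, Real.log_div (ne_of_gt (hθ₀C i).1) (by have := (hθ₀C i).2; intro h; linarith [(hθ₀C i).2]; )]
  -- r^2 = B'/2
  have hB'calc : ((m:ℝ)/2) * (g m θ' - g m θ₀ + (1 - s) * ∑ i, gradg m θ₀ i * θ₀ i)
      = (1/2) * B' := by
    have e1 : ∑ i, gradg m θ₀ i * θ₀ i = (1/(m:ℝ)) * ∑ i, hder (θ₀ i) * θ₀ i := by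
      rw [Finset.mul_sum]
      exact Finset.sum_congr rfl fun i _ => by rw [hgradg i]; ring
    have e0 : ∑ i, hder (θ₀ i) * (θ' i - θ₀ i) = -((1 - s) * ∑ i, hder (θ₀ i) * θ₀ i) := by
      rw [Finset.mul_sum, ← Finset.sum_neg_distrib]
      exact Finset.sum_congr rfl fun i _ => by
        show hder (θ₀ i) * (s * θ₀ i - θ₀ i) = _; ring
    have e2 : B' = (m:ℝ) * g m θ' - (m:ℝ) * g m θ₀ + (1 - s) * ∑ i, hder (θ₀ i) * θ₀ i := by
      rw [hB'_def, Finset.sum_sub_distrib, Finset.sum_sub_distrib, hMg θ', hMg θ₀] at *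
      rw [e0]; ring
    rw [e2, e1]
    field_simp
  have hB'nonneg : 0 ≤ B' := Finset.sum_nonneg fun i _ =>
    breg_nonneg (hIoo _ hθ₀C i) (hIoo _ hθ'C i)
  have hrsq : r^2 = (1/2) * B' := by
    rw [hr, Real.sq_sqrt (by rw [hB'calc]; linarith)]
    exact hB'calc
  -- gradient step (variational inequality)
  have key3 : 0 ≤ ∑ i, hder (θ₀ i) * (θs i - θ' i) := by
    set d : Fin m → ℝ := fun i => θs i - θ' i with hd_def
    set G : ℝ → ℝ := fun t => ∑ i, hder (θ₀ i + t * d i) * d i with hG_def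
    have hG0 : G 0 = ∑ i, hder (θ₀ i) * d i := by
      rw [hG_def]; exact Finset.sum_congr rfl fun i _ => by norm_num
    have haff : ∀ i, ContinuousAt (fun t : ℝ => θ₀ i + t * d i) 0 := by
      intro i; fun_prop
    have htend : Filter.Tendsto G (nhds (0:ℝ)) (nhds (G 0)) := by
      rw [hG0]
      apply tendsto_finset_sum
      intro i _
      have h0 : (fun t : ℝ => θ₀ i + t * d i) 0 = θ₀ i := by norm_num
      have hl1 : ContinuousAt (fun t : ℝ => Real.log (θ₀ i + t * d i)) 0 := by
        have := ContinuousAt.comp (g := Real.log) (f := fun t : ℝ => θ₀ i + t * d i)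
          (x := (0:ℝ)) (by rw [zero_mul, add_zero]; exact Real.continuousAt_log (ne_of_gt (hθ₀C i).1)) (haff i)
        exact this
      have hl2 : ContinuousAt (fun t : ℝ => Real.log (1 - (θ₀ i + t * d i))) 0 := by
        have haff2 : ContinuousAt (fun t : ℝ => 1 - (θ₀ i + t * d i)) 0 := by fun_prop
        have h02 : (fun t : ℝ => 1 - (θ₀ i + t * d i)) 0 = 1 - θ₀ i := by norm_num
        have := ContinuousAt.comp (g := Real.log) (f := fun t : ℝ => 1 - (θ₀ i + t * d i))
          (x := (0:ℝ)) (by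
            rw [zero_mul, add_zero]
            exact Real.continuousAt_log (by have := (hθ₀C i).2; intro h; linarith)) haff2
        exact this
      have hmul : ContinuousAt (fun t : ℝ => hder (θ₀ i + t * d i) * d i) 0 :=
        (hl1.sub hl2).mul continuousAt_const
      have := hmul.tendsto
      simpa [hder] using this
    have htend' : Filter.Tendsto G (nhdsWithin (0:ℝ) (Set.Ioi 0)) (nhds (G 0)) :=
      htend.mono_left nhdsWithin_le_nhds
    have hev : ∀ᶠ t in nhdsWithin (0:ℝ) (Set.Ioi 0), 0 ≤ G t := by
      have hball : ∀ᶠ t in nhds (0:ℝ), ∀ i, θ₀ i + t * d i ∈ Set.Ioo (0:ℝ) 1 := by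
        rw [Filter.eventually_all]
        intro i
        have hv : Set.Ioo (0:ℝ) 1 ∈ nhds ((fun t : ℝ => θ₀ i + t * d i) 0) := by
          apply isOpen_Ioo.mem_nhds
          have : (fun t : ℝ => θ₀ i + t * d i) 0 = θ₀ i := by norm_num
          rw [this]; exact hIoo _ hθ₀C i
        exact Filter.eventually_of_mem ((haff i) hv) (fun t ht => ht)
      have hlt1 : ∀ᶠ t in nhds (0:ℝ), t < 1 :=
        Filter.eventually_of_mem (Iio_mem_nhds (show (0:ℝ) < 1 by norm_num)) (fun t ht => ht)
      filter_upwards [hball.filter_mono nhdsWithin_le_nhds,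
        hlt1.filter_mono nhdsWithin_le_nhds, self_mem_nhdsWithin] with t hti ht1 ht0
      have ht0' : (0:ℝ) < t := ht0
      set θt : Fin m → ℝ := fun i => θ₀ i + t * d i with hθt_def
      have hθtC : ∀ i, 0 < θt i ∧ θt i < 1 := fun i => ⟨(hti i).1, (hti i).2⟩
      have hid : ∀ (w : Fin m → ℝ),
          ∑ i, θt i * w i = (1 - t*s) * ∑ i, θ₀ i * w i + t * ∑ i, θs i * w i := by
        intro w
        rw [Finset.mul_sum, Finset.mul_sum, ← Finset.sum_add_distrib]
        apply Finset.sum_congr rfl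
        intro i _
        show (θ₀ i + t * (θs i - s * θ₀ i)) * w i = _
        ring
      have hts : t * s < 1 := by nlinarith
      have hθtF : θt ∈ Feas m p X b lam₀ := by
        refine ⟨hθtC, ?_, ?_⟩
        · intro j
          rw [hid (X j)]
          calc |(1 - t*s) * ∑ i, θ₀ i * X j i + t * ∑ i, θs i * X j i|
              ≤ |(1 - t*s) * ∑ i, θ₀ i * X j i| + |t * ∑ i, θs i * X j i| := abs_add_le _ _
            _ = (1 - t*s) * |∑ i, θ₀ i * X j i| + t * |∑ i, θs i * X j i| := by
                rw [abs_mul, abs_mul, abs_of_nonneg (by linarith), abs_of_pos ht0']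
            _ ≤ (1 - t*s) * ((m:ℝ)*lam₀) + t * ((m:ℝ)*lam) := by
                have h1 := mul_le_mul_of_nonneg_left (hθ₀X j) (show (0:ℝ) ≤ 1 - t*s by linarith)
                have h2 := mul_le_mul_of_nonneg_left (hθsX j) (le_of_lt ht0')
                linarith
            _ = (m:ℝ) * lam₀ := by rw [← hslam]; ring
        · rw [hid b, hθ₀b, hθsb]; ring
      have hgt : g m θ₀ ≤ g m θt := hθ₀min θt hθtF
      have hsum : 0 ≤ ∑ i, (hfun (θ₀ i) - hfun (θt i) - hder (θt i) * (θ₀ i - θt i)) :=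
        Finset.sum_nonneg fun i _ => breg_nonneg (hti i) (hIoo _ hθ₀C i)
      have e3 : ∑ i, hder (θt i) * (θ₀ i - θt i) = -(t * G t) := by
        show ∑ i, hder (θ₀ i + t * d i) * (θ₀ i - (θ₀ i + t * d i))
            = -(t * ∑ i, hder (θ₀ i + t * d i) * d i)
        rw [Finset.mul_sum, ← Finset.sum_neg_distrib]
        exact Finset.sum_congr rfl fun i _ => by ring
      rw [Finset.sum_sub_distrib, Finset.sum_sub_distrib, e3] at hsum
      have hexp : 0 ≤ (m:ℝ) * g m θ₀ - (m:ℝ) * g m θt + t * G t := by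
        have e1 := hMg θ₀
        have e2 := hMg θt
        linarith [hsum]
      have hMgt := mul_le_mul_of_nonneg_left hgt (le_of_lt hM)
      have htG : t * 0 ≤ t * G t := by rw [mul_zero]; linarith
      exact le_of_mul_le_mul_left htG ht0'
    have := ge_of_tendsto htend' hev
    rw [hG0] at this
    exact this
  -- chain
  have key2 : Bs ≤ B' := by
    have e1 : Bs = (m:ℝ) * g m θs - (m:ℝ) * g m θ₀ - ∑ i, hder (θ₀ i) * (θs i - θ₀ i) := by
      rw [hBs_def, hMg, hMg, Finset.sum_sub_distrib, Finset.sum_sub_distrib]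
    have e2 : B' = (m:ℝ) * g m θ' - (m:ℝ) * g m θ₀ - ∑ i, hder (θ₀ i) * (θ' i - θ₀ i) := by
      rw [hB'_def, hMg, hMg, Finset.sum_sub_distrib, Finset.sum_sub_distrib]
    have e3 : ∑ i, hder (θ₀ i) * (θs i - θ₀ i)
        = ∑ i, hder (θ₀ i) * (θs i - θ' i) + ∑ i, hder (θ₀ i) * (θ' i - θ₀ i) := by
      rw [← Finset.sum_add_distrib]
      exact Finset.sum_congr rfl fun i _ => by ring
    have hgg : (m:ℝ) * g m θs ≤ (m:ℝ) * g m θ' :=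
      mul_le_mul_of_nonneg_left hgs' (le_of_lt hM)
    rw [e1, e2, e3]
    linarith
  have hball : ∑ i, (θs i - θ₀ i)^2 < r^2 := by
    rw [hrsq]; linarith
  constructor
  · exact ⟨by rw [hA]; exact ⟨le_of_lt hball, hθsb, hxs⟩, hball⟩
  · -- part (ii)
    intro v
    have hrnn : 0 ≤ r := by rw [hr]; exact Real.sqrt_nonneg _
    have hclosed : IsClosed A := by
      rw [hA]
      have c1 : Continuous fun θ : Fin m → ℝ => ∑ i, (θ i - θ₀ i)^2 :=
        continuous_finset_sum _ fun i _ => ((continuous_apply i).sub continuous_const).pow 2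
      have c2 : Continuous fun θ : Fin m → ℝ => ∑ i, θ i * b i :=
        continuous_finset_sum _ fun i _ => (continuous_apply i).mul continuous_const
      have c3 : Continuous fun θ : Fin m → ℝ => ∑ i, θ i * xstar i :=
        continuous_finset_sum _ fun i _ => (continuous_apply i).mul continuous_const
      exact ((isClosed_le c1 continuous_const).inter
        ((isClosed_eq c2 continuous_const).inter (isClosed_le c3 continuous_const)))
    have hsub : A ⊆ Metric.closedBall θ₀ r := by
      rw [hA]
      intro θ hθ
      rw [Metric.mem_closedBall, dist_pi_le_iff hrnn]
      intro i
      rw [Real.dist_eq]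
      have h1 : (θ i - θ₀ i)^2 ≤ r^2 := by
        refine le_trans ?_ hθ.1
        exact Finset.single_le_sum (f := fun k => (θ k - θ₀ k)^2)
          (fun j _ => sq_nonneg _) (Finset.mem_univ i)
      calc |θ i - θ₀ i| = Real.sqrt ((θ i - θ₀ i)^2) := (Real.sqrt_sq_eq_abs _).symm
        _ ≤ Real.sqrt (r^2) := Real.sqrt_le_sqrt h1
        _ = r := by rw [Real.sqrt_sq hrnn]
    have hcomp : IsCompact A :=
      (isCompact_closedBall θ₀ r).of_isClosed_subset hclosed hsub
    have hne : A.Nonempty := ⟨θs, by rw [hA]; exact ⟨le_of_lt hball, hθsb, hxs⟩⟩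
    have hcontv : ContinuousOn (fun θ : Fin m → ℝ => ∑ i, θ i * v i) A :=
      (continuous_finset_sum _ fun i _ => (continuous_apply i).mul continuous_const).continuousOn
    obtain ⟨θm, hθmA, hθmmin⟩ := hcomp.exists_isMinOn hne hcontv
    exact ⟨θm, hθmA, fun θ hθ => hθmmin hθ⟩
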